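/- Let Q_{n,m} be the quiver with two vertices and n arrows c₁,…,c_n from vertex 1 to vertex 2 and m arrows b₁,…,b_m from vertex 2 to vertex 1, C the span of the c_i, B the span of the b_j. Fix k-subspaces V₁,…,V_m ⊆ C of dimension t and W₁,…,W_m ⊆ C of codimension t, and let R_F = kQ_{n,m}/I_F where I_F is generated by the relations: b c b' = 0 for all c ∈ C, b, b' ∈ B; w b_i = 0 for all w ∈ W_i; b_i v = 0 for all v ∈ V_i. Choose subspaces V, W ⊆ C with dim V = t, dim W = n − t, V ∩ W_i = 0, W ∩ V_i = 0 for all i, and V ⊕ W = C. Then as vector spaces: e₁ R_F e₁ = ⟨e₁⟩ ⊕ ⊕_j b_j W, e₁ R_F e₂ = B, e₂ R_F e₁ = C ⊕ ⊕_j V b_j W, and e₂ R_F e₂ = ⟨e₂⟩ ⊕ ⊕_j V b_j. -/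

import Mathlib

set_option synthInstance.maxHeartbeats 1000000
set_option maxHeartbeats 1600000


/-- Generators of the path algebra of the two-vertex quiver `Q_{n,m}`:
vertex idempotents `e1, e2`, arrows `c i : 1 → 2` and `b j : 2 → 1`. -/
inductive QGen (n m : ℕ) : Type
  | e1 | e2 | c (i : Fin n) | b (j : Fin m)

section

variable (k : Type) [Field k] (n m : ℕ)

/-- The generator `e₁` in the free algebra. -/
noncomputable def gE1 : FreeAlgebra k (QGen n m) := FreeAlgebra.ι k QGen.e1

/-- The generator `e₂` in the free algebra. -/
noncomputable def gE2 : FreeAlgebra k (QGen n m) := FreeAlgebra.ι k QGen.e2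

/-- The generator `c i` in the free algebra. -/
noncomputable def gC (i : Fin n) : FreeAlgebra k (QGen n m) := FreeAlgebra.ι k (QGen.c i)

/-- The generator `b j` in the free algebra. -/
noncomputable def gB (j : Fin m) : FreeAlgebra k (QGen n m) := FreeAlgebra.ι k (QGen.b j)

/-- The linear combination `∑ u i • c i` of the arrows `c i`, i.e. the identification of
the coefficient space `k^n` with the span `C` of the arrows `c₁, …, c_n`. -/
noncomputable def glc : (Fin n → k) →ₗ[k] FreeAlgebra k (QGen n m) :=
  ∑ i : Fin n, (LinearMap.toSpanSingleton k _ (gC k n m i)).comp (LinearMap.proj i)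

/-- The relations defining `R_F = kQ_{n,m}/I_F`: the path-algebra relations of the
quiver `Q_{n,m}` together with the relations `b c b' = 0`, `w · b j = 0` for `w ∈ W j`,
and `b j · v = 0` for `v ∈ V j` attached to the family
`F = {V₁, …, V_m; W₁, …, W_m}` of subspaces of `C = k^n`. -/
inductive relF (V W : Fin m → Submodule k (Fin n → k)) :
    FreeAlgebra k (QGen n m) → FreeAlgebra k (QGen n m) → Prop
  | idem1 : relF V W (gE1 k n m * gE1 k n m) (gE1 k n m)
  | idem2 : relF V W (gE2 k n m * gE2 k n m) (gE2 k n m)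
  | orth12 : relF V W (gE1 k n m * gE2 k n m) 0
  | orth21 : relF V W (gE2 k n m * gE1 k n m) 0
  | unit : relF V W (gE1 k n m + gE2 k n m) 1
  | cLeft (i : Fin n) : relF V W (gE2 k n m * gC k n m i) (gC k n m i)
  | cRight (i : Fin n) : relF V W (gC k n m i * gE1 k n m) (gC k n m i)
  | bLeft (j : Fin m) : relF V W (gE1 k n m * gB k n m j) (gB k n m j)
  | bRight (j : Fin m) : relF V W (gB k n m j * gE2 k n m) (gB k n m j)
  | bcb (i : Fin n) (j j' : Fin m) :
      relF V W (gB k n m j * gC k n m i * gB k n m j') 0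
  | wb (j : Fin m) (w : Fin n → k) (hw : w ∈ W j) :
      relF V W (glc k n m w * gB k n m j) 0
  | bv (j : Fin m) (v : Fin n → k) (hv : v ∈ V j) :
      relF V W (gB k n m j * glc k n m v) 0

/-- The algebra `R_F = kQ_{n,m}/I_F`. -/
abbrev RF (V W : Fin m → Submodule k (Fin n → k)) := RingQuot (relF k n m V W)

variable (V W : Fin m → Submodule k (Fin n → k))

/-- The projection from the free algebra onto `R_F`. -/
noncomputable def prF : FreeAlgebra k (QGen n m) →ₐ[k] RF k n m V W :=
  RingQuot.mkAlgHom k _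

/-- The idempotent `e₁` of `R_F`. -/
noncomputable def qE1 : RF k n m V W := prF k n m V W (gE1 k n m)

/-- The idempotent `e₂` of `R_F`. -/
noncomputable def qE2 : RF k n m V W := prF k n m V W (gE2 k n m)

/-- The arrow `c i` of `R_F`. -/
noncomputable def qC (i : Fin n) : RF k n m V W := prF k n m V W (gC k n m i)

/-- The arrow `b j` of `R_F`. -/
noncomputable def qB (j : Fin m) : RF k n m V W := prF k n m V W (gB k n m j)

/-- The identification of `k^n` with the span `C ⊆ R_F` of the arrows `c i`. -/
noncomputable def qlc : (Fin n → k) →ₗ[k] RF k n m V W :=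
  (prF k n m V W).toLinearMap.comp (glc k n m)

/-- Left multiplication by `x` as an endomorphism of `R_F` viewed as a right module
over itself; its range is the right ideal `x·R_F` and its kernel is the right
annihilator `rAnn(x)`. -/
noncomputable def rmul (x : RF k n m V W) :
    RF k n m V W →ₗ[(RF k n m V W)ᵐᵒᵖ] RF k n m V W where
  toFun y := x * y
  map_add' := mul_add x
  map_smul' r y := by
    simp only [RingHom.id_apply, MulOpposite.smul_eq_mul_unop]
    rw [mul_assoc]

end

section

variable (k : Type) [Field k] (n m : ℕ) (V W : Fin m → Submodule k (Fin n → k))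

/-- The corner subspace `x · R_F · y` of `R_F`. -/
noncomputable def cornerSub (x y : RF k n m V W) : Submodule k (RF k n m V W) :=
  LinearMap.range ((LinearMap.mulLeft k x).comp (LinearMap.mulRight k y))

/-- The subspace `b_j W₀ ⊆ R_F` for a subspace `W₀ ⊆ C = k^n`. -/
noncomputable def bWsub (W₀ : Submodule k (Fin n → k)) (j : Fin m) :
    Submodule k (RF k n m V W) :=
  Submodule.map ((LinearMap.mulLeft k (qB k n m V W j)).comp (qlc k n m V W)) W₀

/-- The subspace `V₀ b_j ⊆ R_F` for a subspace `V₀ ⊆ C = k^n`. -/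
noncomputable def VbSub (V₀ : Submodule k (Fin n → k)) (j : Fin m) :
    Submodule k (RF k n m V W) :=
  Submodule.map ((LinearMap.mulRight k (qB k n m V W j)).comp (qlc k n m V W)) V₀

/-- The subspace `V₀ b_j W₀ ⊆ R_F`. -/
noncomputable def VbWsub (V₀ W₀ : Submodule k (Fin n → k)) (j : Fin m) :
    Submodule k (RF k n m V W) :=
  Submodule.span k {x | ∃ v ∈ V₀, ∃ w ∈ W₀,
    x = qlc k n m V W v * qB k n m V W j * qlc k n m V W w}


open scoped TensorProduct

/-! ### Auxiliary material -/

/-- A family of submodules is independent if it admits a family of "projections"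
that are the identity on the corresponding piece and vanish on the other pieces. -/
theorem auxIndepOfProj {K A : Type*} {ι : Sort*} [Field K] [AddCommGroup A] [Module K A]
    (f : ι → Submodule K A) (p : ι → A →ₗ[K] A)
    (hid : ∀ i, ∀ x ∈ f i, p i x = x)
    (hz : ∀ i j, j ≠ i → ∀ x ∈ f j, p i x = 0) : iSupIndep f := by
  intro i
  have h1 : (⨆ (j) (_ : j ≠ i), f j) ≤ LinearMap.ker (p i) :=
    iSup_le fun j => iSup_le fun hj x hx => LinearMap.mem_ker.2 (hz i j hj x hx)
  refine Disjoint.mono_right h1 ?_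
  rw [Submodule.disjoint_def]
  intro x hxf hxk
  rw [← hid i x hxf]
  exact LinearMap.mem_ker.1 hxk

section AuxRel

variable {k : Type} [Field k] {n m : ℕ} {V W : Fin m → Submodule k (Fin n → k)}

local notation "ε₁" => qE1 k n m V W
local notation "ε₂" => qE2 k n m V W
local notation "γ" => qC k n m V W
local notation "β" => qB k n m V W
local notation "ℓ" => qlc k n m V W
local notation "ρ" => prF k n m V W

lemma auxRel {x y : FreeAlgebra k (QGen n m)} (h : relF k n m V W x y) : ρ x = ρ y := by
  unfold prF
  exact RingQuot.mkAlgHom_rel k h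

lemma aux_e11 : ε₁ * ε₁ = ε₁ := by
  rw [qE1, ← map_mul]; exact auxRel relF.idem1

lemma aux_e22 : ε₂ * ε₂ = ε₂ := by
  rw [qE2, ← map_mul]; exact auxRel relF.idem2

lemma aux_e12 : ε₁ * ε₂ = 0 := by
  rw [qE1, qE2, ← map_mul, ← map_zero (prF k n m V W)]; exact auxRel relF.orth12

lemma aux_e21 : ε₂ * ε₁ = 0 := by
  rw [qE1, qE2, ← map_mul, ← map_zero (prF k n m V W)]; exact auxRel relF.orth21

lemma aux_unit : ε₁ + ε₂ = 1 := by
  rw [qE1, qE2, ← map_add, ← map_one (prF k n m V W)]; exact auxRel relF.unit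

lemma aux_e2c (i : Fin n) : ε₂ * γ i = γ i := by
  rw [qE2, qC, ← map_mul]; exact auxRel (relF.cLeft i)

lemma aux_ce1 (i : Fin n) : γ i * ε₁ = γ i := by
  rw [qE1, qC, ← map_mul]; exact auxRel (relF.cRight i)

lemma aux_e1b (j : Fin m) : ε₁ * β j = β j := by
  rw [qE1, qB, ← map_mul]; exact auxRel (relF.bLeft j)

lemma aux_be2 (j : Fin m) : β j * ε₂ = β j := by
  rw [qE2, qB, ← map_mul]; exact auxRel (relF.bRight j)

lemma aux_bcb0 (i : Fin n) (j j' : Fin m) : β j * γ i * β j' = 0 := by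
  simp only [qB, qC]
  rw [← map_mul, ← map_mul, ← map_zero (prF k n m V W)]
  exact auxRel (relF.bcb i j j')

lemma aux_qlc_eq (u : Fin n → k) : ℓ u = ∑ i, u i • γ i := by
  simp [qlc, glc, qC, LinearMap.sum_apply, LinearMap.toSpanSingleton_apply, map_sum, map_smul]

lemma aux_qlc_single (i : Fin n) : ℓ (Pi.single i 1) = γ i := by
  rw [aux_qlc_eq]
  rw [Finset.sum_eq_single i (fun j _ hj => by simp [Pi.single_eq_of_ne hj]) (by simp)]
  simp

lemma aux_e2lc (u : Fin n → k) : ε₂ * ℓ u = ℓ u := by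
  rw [aux_qlc_eq, Finset.mul_sum]
  exact Finset.sum_congr rfl fun i _ => by rw [mul_smul_comm, aux_e2c]

lemma aux_lce1 (u : Fin n → k) : ℓ u * ε₁ = ℓ u := by
  rw [aux_qlc_eq, Finset.sum_mul]
  exact Finset.sum_congr rfl fun i _ => by rw [smul_mul_assoc, aux_ce1]

lemma aux_e1lc (u : Fin n → k) : ε₁ * ℓ u = 0 := by
  rw [← aux_e2lc u, ← mul_assoc, aux_e12, zero_mul]

lemma aux_lce2 (u : Fin n → k) : ℓ u * ε₂ = 0 := by
  rw [← aux_lce1 u, mul_assoc, aux_e12, mul_zero]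

lemma aux_e2b (j : Fin m) : ε₂ * β j = 0 := by
  rw [← aux_e1b j, ← mul_assoc, aux_e21, zero_mul]

lemma aux_be1 (j : Fin m) : β j * ε₁ = 0 := by
  rw [← aux_be2 j, mul_assoc, aux_e21, mul_zero]

lemma aux_bb (j j' : Fin m) : β j * β j' = 0 := by
  rw [← aux_e1b j', ← mul_assoc, aux_be1, zero_mul]

lemma aux_lclc (u u' : Fin n → k) : ℓ u * ℓ u' = 0 := by
  rw [← aux_e2lc u', ← mul_assoc, aux_lce2, zero_mul]

lemma aux_bcb (j j' : Fin m) (u : Fin n → k) : β j * (ℓ u * β j') = 0 := by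
  rw [aux_qlc_eq, Finset.sum_mul, Finset.mul_sum]
  refine Finset.sum_eq_zero fun i _ => ?_
  rw [smul_mul_assoc, mul_smul_comm, ← mul_assoc, aux_bcb0, smul_zero]

lemma aux_wb {j : Fin m} {w : Fin n → k} (hw : w ∈ W j) : ℓ w * β j = 0 := by
  have : ρ (glc k n m w * gB k n m j) = ρ 0 := auxRel (relF.wb j w hw)
  rw [map_mul, map_zero] at this
  exact this

lemma aux_bv {j : Fin m} {v : Fin n → k} (hv : v ∈ V j) : β j * ℓ v = 0 := by
  have : ρ (gB k n m j * glc k n m v) = ρ 0 := auxRel (relF.bv j v hv)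
  rw [map_mul, map_zero] at this
  exact this

end AuxRel


section Aux2

variable {k : Type} [Field k] {n m : ℕ} {V W : Fin m → Submodule k (Fin n → k)}

local notation "ε₁" => qE1 k n m V W
local notation "ε₂" => qE2 k n m V W
local notation "β" => qB k n m V W
local notation "ℓ" => qlc k n m V W

lemma aux_proj_sub_mem {E : Type*} [AddCommGroup E] [Module k E]
    (p q : Submodule k E) (h : IsCompl p q) (u : E) :
    u - ↑(p.projectionOnto q h u) ∈ q := by
  rw [← Submodule.linearProjOfIsCompl_apply_eq_zero_iff h]
  simp [map_sub, -Submodule.coe_projectionOnto_apply]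

lemma aux_b_red (W₀ : Submodule k (Fin n → k)) (j : Fin m) (hQj : IsCompl W₀ (V j))
    (u : Fin n → k) :
    β j * ℓ u = β j * ℓ ↑(W₀.linearProjOfIsCompl (V j) hQj u) := by
  have h := aux_bv (V:=V) (W:=W) (aux_proj_sub_mem W₀ (V j) hQj u)
  rw [map_sub, mul_sub, sub_eq_zero] at h
  exact h

lemma aux_c_red (V₀ : Submodule k (Fin n → k)) (j : Fin m) (hPj : IsCompl V₀ (W j))
    (u : Fin n → k) :
    ℓ u * β j = ℓ ↑(V₀.linearProjOfIsCompl (W j) hPj u) * β j := by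
  have h := aux_wb (V:=V) (W:=W) (aux_proj_sub_mem V₀ (W j) hPj u)
  rw [map_sub, sub_mul, sub_eq_zero] at h
  exact h

/-- The bilinear map `(v, w) ↦ v bⱼ w` as a linear map on the tensor product. -/
noncomputable def auxPhi (V₀ W₀ : Submodule k (Fin n → k)) (j : Fin m) :
    (↥V₀ ⊗[k] ↥W₀) →ₗ[k] RF k n m V W :=
  TensorProduct.lift (LinearMap.mk₂ k (fun v w => ℓ ↑v * β j * ℓ ↑w)
    (fun v v' w => by simp [Submodule.coe_add, map_add, add_mul])
    (fun c v w => by simp [Submodule.coe_smul, map_smul, smul_mul_assoc])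
    (fun v w w' => by simp [Submodule.coe_add, map_add, mul_add])
    (fun c v w => by simp [Submodule.coe_smul, map_smul, mul_smul_comm]))

lemma auxPhi_tmul (V₀ W₀ : Submodule k (Fin n → k)) (j : Fin m) (v : ↥V₀) (w : ↥W₀) :
    auxPhi V₀ W₀ j (v ⊗ₜ[k] w) = ℓ ↑v * β j * ℓ ↑w := by
  simp [auxPhi]

lemma aux_VbW_eq (V₀ W₀ : Submodule k (Fin n → k)) (j : Fin m) :
    VbWsub k n m V W V₀ W₀ j = LinearMap.range (auxPhi V₀ W₀ j) := by
  apply le_antisymm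
  · rw [VbWsub, Submodule.span_le]
    rintro x ⟨v, hv, w, hw, rfl⟩
    exact ⟨⟨v, hv⟩ ⊗ₜ[k] ⟨w, hw⟩, by simp [auxPhi]⟩
  · rintro x ⟨t, rfl⟩
    induction t using TensorProduct.induction_on with
    | zero => rw [map_zero]; exact zero_mem _
    | tmul v w =>
        exact Submodule.subset_span ⟨↑v, v.2, ↑w, w.2, by simp [auxPhi]⟩
    | add a b ha hb => rw [map_add]; exact add_mem ha hb

lemma aux_mem_bW (W₀ : Submodule k (Fin n → k)) (j : Fin m) {w : Fin n → k} (hw : w ∈ W₀) :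
    β j * ℓ w ∈ bWsub k n m V W W₀ j :=
  Submodule.mem_map.2 ⟨w, hw, rfl⟩

lemma aux_bW_elim {W₀ : Submodule k (Fin n → k)} {j : Fin m} {x : RF k n m V W}
    (hx : x ∈ bWsub k n m V W W₀ j) : ∃ w ∈ W₀, x = β j * ℓ w := by
  obtain ⟨w, hw, rfl⟩ := Submodule.mem_map.1 hx
  exact ⟨w, hw, rfl⟩

lemma aux_mem_Vb (V₀ : Submodule k (Fin n → k)) (j : Fin m) {v : Fin n → k} (hv : v ∈ V₀) :
    ℓ v * β j ∈ VbSub k n m V W V₀ j :=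
  Submodule.mem_map.2 ⟨v, hv, rfl⟩

lemma aux_Vb_elim {V₀ : Submodule k (Fin n → k)} {j : Fin m} {x : RF k n m V W}
    (hx : x ∈ VbSub k n m V W V₀ j) : ∃ v ∈ V₀, x = ℓ v * β j := by
  obtain ⟨v, hv, rfl⟩ := Submodule.mem_map.1 hx
  exact ⟨v, hv, rfl⟩

lemma aux_mem_VbW (V₀ W₀ : Submodule k (Fin n → k)) (j : Fin m) {v w : Fin n → k}
    (hv : v ∈ V₀) (hw : w ∈ W₀) :
    ℓ v * β j * ℓ w ∈ VbWsub k n m V W V₀ W₀ j :=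
  Submodule.subset_span ⟨v, hv, w, hw, rfl⟩

end Aux2


section Aux3

/-- The underlying space of the model representation of `R_F`. -/
abbrev auxM (k : Type) [Field k] (n m : ℕ) (V₀ W₀ : Submodule k (Fin n → k)) : Type := (k × (Fin m → ↥W₀) × (Fin m → k)) ×
  ((Fin n → k) × (Fin m → (↥V₀ ⊗[k] ↥W₀)) × k × (Fin m → ↥V₀))

/-- Projection onto `V₀` along `W j`. -/
noncomputable def auxP (k : Type) [Field k] (n m : ℕ) (V W : Fin m → Submodule k (Fin n → k)) (V₀ W₀ : Submodule k (Fin n → k)) (hP : ∀ j, IsCompl V₀ (W j)) (j : Fin m) : (Fin n → k) →ₗ[k] ↥V₀ :=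
  V₀.linearProjOfIsCompl (W j) (hP j)

/-- Projection onto `W₀` along `V j`. -/
noncomputable def auxQ (k : Type) [Field k] (n m : ℕ) (V W : Fin m → Submodule k (Fin n → k)) (V₀ W₀ : Submodule k (Fin n → k)) (hQ : ∀ j, IsCompl W₀ (V j)) (j : Fin m) : (Fin n → k) →ₗ[k] ↥W₀ :=
  W₀.linearProjOfIsCompl (V j) (hQ j)

/-- Action of `e₁` on the model. -/
noncomputable def auxE1 (k : Type) [Field k] (n m : ℕ) (V W : Fin m → Submodule k (Fin n → k)) (V₀ W₀ : Submodule k (Fin n → k)) : Module.End k (auxM k n m V₀ W₀) :=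
  (LinearMap.inl k _ _).comp (LinearMap.fst k _ _)

/-- Action of `e₂` on the model. -/
noncomputable def auxE2 (k : Type) [Field k] (n m : ℕ) (V W : Fin m → Submodule k (Fin n → k)) (V₀ W₀ : Submodule k (Fin n → k)) : Module.End k (auxM k n m V₀ W₀) :=
  (LinearMap.inr k _ _).comp (LinearMap.snd k _ _)

lemma auxE1_apply (k : Type) [Field k] (n m : ℕ) (V W : Fin m → Submodule k (Fin n → k)) (V₀ W₀ : Submodule k (Fin n → k)) (x : auxM k n m V₀ W₀) : auxE1 k n m V W V₀ W₀ x = (x.1, 0) := rfl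

lemma auxE2_apply (k : Type) [Field k] (n m : ℕ) (V W : Fin m → Submodule k (Fin n → k)) (V₀ W₀ : Submodule k (Fin n → k)) (x : auxM k n m V₀ W₀) : auxE2 k n m V W V₀ W₀ x = (0, x.2) := rfl

/-- Action of the span `C` of the arrows `c i` on the model. -/
noncomputable def auxC (k : Type) [Field k] (n m : ℕ) (V W : Fin m → Submodule k (Fin n → k)) (V₀ W₀ : Submodule k (Fin n → k)) (hP : ∀ j, IsCompl V₀ (W j)) :
    (Fin n → k) →ₗ[k] Module.End k (auxM k n m V₀ W₀) :=
  LinearMap.mk₂ k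
    (fun u x => (0, (x.1.1 • u,
        fun j => (auxP k n m V W V₀ W₀ hP j u) ⊗ₜ[k] x.1.2.1 j, 0,
        fun j => x.1.2.2 j • auxP k n m V W V₀ W₀ hP j u)))
    (fun u u' x => by
      simp [Prod.ext_iff, funext_iff, smul_add, TensorProduct.add_tmul])
    (fun c u x => by
      simp [Prod.ext_iff, funext_iff, TensorProduct.smul_tmul', smul_comm c])
    (fun u x y => by
      simp [Prod.ext_iff, funext_iff, add_smul, TensorProduct.tmul_add])
    (fun c u x => by
      simp [Prod.ext_iff, funext_iff, mul_smul, smul_eq_mul])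

lemma auxC_apply (k : Type) [Field k] (n m : ℕ) (V W : Fin m → Submodule k (Fin n → k)) (V₀ W₀ : Submodule k (Fin n → k)) (hP : ∀ j, IsCompl V₀ (W j)) (u : Fin n → k) (x : auxM k n m V₀ W₀) :
    auxC k n m V W V₀ W₀ hP u x = (0, (x.1.1 • u,
        fun j => (auxP k n m V W V₀ W₀ hP j u) ⊗ₜ[k] x.1.2.1 j, 0,
        fun j => x.1.2.2 j • auxP k n m V W V₀ W₀ hP j u)) := rfl

/-- Action of `b j` on the model. -/
noncomputable def auxB (k : Type) [Field k] (n m : ℕ) (V W : Fin m → Submodule k (Fin n → k)) (V₀ W₀ : Submodule k (Fin n → k)) (hQ : ∀ j, IsCompl W₀ (V j)) (j : Fin m) :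
    Module.End k (auxM k n m V₀ W₀) where
  toFun x := ((0, Pi.single j (auxQ k n m V W V₀ W₀ hQ j x.2.1), Pi.single j x.2.2.2.1), 0)
  map_add' x y := by
    simp only [Prod.fst_add, Prod.snd_add, Pi.add_apply, map_add, Pi.single_add,
      Prod.mk_add_mk, add_zero]
  map_smul' c x := by
    simp only [Prod.smul_fst, Prod.smul_snd, Pi.smul_apply, map_smul, Pi.single_smul,
      Prod.smul_mk, RingHom.id_apply, smul_zero]

lemma auxB_apply (k : Type) [Field k] (n m : ℕ) (V W : Fin m → Submodule k (Fin n → k)) (V₀ W₀ : Submodule k (Fin n → k)) (hQ : ∀ j, IsCompl W₀ (V j)) (j : Fin m) (x : auxM k n m V₀ W₀) :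
    auxB k n m V W V₀ W₀ hQ j x
      = ((0, Pi.single j (auxQ k n m V W V₀ W₀ hQ j x.2.1), Pi.single j x.2.2.2.1), 0) := rfl

end Aux3


section Aux4

variable (k : Type) [Field k] (n m : ℕ) (V W : Fin m → Submodule k (Fin n → k))
variable (V₀ W₀ : Submodule k (Fin n → k))
variable (hP : ∀ j, IsCompl V₀ (W j)) (hQ : ∀ j, IsCompl W₀ (V j))

lemma auxR11 : auxE1 k n m V W V₀ W₀ * auxE1 k n m V W V₀ W₀ = auxE1 k n m V W V₀ W₀ :=
  LinearMap.ext fun _ => rfl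

lemma auxR22 : auxE2 k n m V W V₀ W₀ * auxE2 k n m V W V₀ W₀ = auxE2 k n m V W V₀ W₀ :=
  LinearMap.ext fun _ => rfl

lemma auxR12 : auxE1 k n m V W V₀ W₀ * auxE2 k n m V W V₀ W₀ = 0 :=
  LinearMap.ext fun _ => rfl

lemma auxR21 : auxE2 k n m V W V₀ W₀ * auxE1 k n m V W V₀ W₀ = 0 :=
  LinearMap.ext fun _ => rfl

lemma auxRunit : auxE1 k n m V W V₀ W₀ + auxE2 k n m V W V₀ W₀ = 1 :=
  LinearMap.ext fun x => by
    simp [LinearMap.add_apply, auxE1_apply, auxE2_apply, Prod.ext_iff]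

lemma auxR2C (u : Fin n → k) :
    auxE2 k n m V W V₀ W₀ * auxC k n m V W V₀ W₀ hP u = auxC k n m V W V₀ W₀ hP u :=
  LinearMap.ext fun _ => rfl

lemma auxRC1 (u : Fin n → k) :
    auxC k n m V W V₀ W₀ hP u * auxE1 k n m V W V₀ W₀ = auxC k n m V W V₀ W₀ hP u :=
  LinearMap.ext fun _ => rfl

lemma auxR1B (j : Fin m) :
    auxE1 k n m V W V₀ W₀ * auxB k n m V W V₀ W₀ hQ j = auxB k n m V W V₀ W₀ hQ j :=
  LinearMap.ext fun _ => rfl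

lemma auxRB2 (j : Fin m) :
    auxB k n m V W V₀ W₀ hQ j * auxE2 k n m V W V₀ W₀ = auxB k n m V W V₀ W₀ hQ j :=
  LinearMap.ext fun _ => rfl

lemma auxRBCB (u : Fin n → k) (j j' : Fin m) :
    auxB k n m V W V₀ W₀ hQ j * auxC k n m V W V₀ W₀ hP u * auxB k n m V W V₀ W₀ hQ j' = 0 :=
  LinearMap.ext fun x => by
    simp [Module.End.mul_apply, auxB_apply, auxC_apply, Prod.ext_iff]

lemma auxRWB (j : Fin m) (w : Fin n → k) (hw : w ∈ W j) :
    auxC k n m V W V₀ W₀ hP w * auxB k n m V W V₀ W₀ hQ j = 0 := by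
  have hP0 : auxP k n m V W V₀ W₀ hP j w = 0 :=
    Submodule.linearProjOfIsCompl_apply_right' (hP j) hw
  refine LinearMap.ext fun x => ?_
  simp only [Module.End.mul_apply, auxB_apply, auxC_apply, LinearMap.zero_apply]
  refine Prod.ext rfl (Prod.ext (by simp) (Prod.ext ?_ (Prod.ext rfl ?_)))
  · funext j'
    rcases eq_or_ne j' j with rfl | hne
    · simp [hP0]
    · simp [Pi.single_eq_of_ne hne]
  · funext j'
    rcases eq_or_ne j' j with rfl | hne
    · simp [hP0]
    · simp [Pi.single_eq_of_ne hne]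

lemma auxRBV (j : Fin m) (v : Fin n → k) (hv : v ∈ V j) :
    auxB k n m V W V₀ W₀ hQ j * auxC k n m V W V₀ W₀ hP v = 0 := by
  have hQ0 : auxQ k n m V W V₀ W₀ hQ j v = 0 :=
    Submodule.linearProjOfIsCompl_apply_right' (hQ j) hv
  refine LinearMap.ext fun x => ?_
  simp only [Module.End.mul_apply, auxB_apply, auxC_apply, LinearMap.zero_apply]
  have : auxQ k n m V W V₀ W₀ hQ j (x.1.1 • v) = 0 := by rw [map_smul, hQ0, smul_zero]
  simp [this, Prod.ext_iff]

/-- The representation of the free algebra on the model. -/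
noncomputable def auxPhiF : FreeAlgebra k (QGen n m) →ₐ[k] Module.End k (auxM k n m V₀ W₀) :=
  FreeAlgebra.lift k fun g => match g with
    | QGen.e1 => auxE1 k n m V W V₀ W₀
    | QGen.e2 => auxE2 k n m V W V₀ W₀
    | QGen.c i => auxC k n m V W V₀ W₀ hP (Pi.single i 1)
    | QGen.b j => auxB k n m V W V₀ W₀ hQ j

lemma auxPhiF_e1 : auxPhiF k n m V W V₀ W₀ hP hQ (gE1 k n m) = auxE1 k n m V W V₀ W₀ := by
  simp [auxPhiF, gE1]

lemma auxPhiF_e2 : auxPhiF k n m V W V₀ W₀ hP hQ (gE2 k n m) = auxE2 k n m V W V₀ W₀ := by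
  simp [auxPhiF, gE2]

lemma auxPhiF_c (i : Fin n) : auxPhiF k n m V W V₀ W₀ hP hQ (gC k n m i)
    = auxC k n m V W V₀ W₀ hP (Pi.single i 1) := by
  simp [auxPhiF, gC]

lemma auxPhiF_b (j : Fin m) : auxPhiF k n m V W V₀ W₀ hP hQ (gB k n m j)
    = auxB k n m V W V₀ W₀ hQ j := by
  simp [auxPhiF, gB]

lemma auxPhiF_glc (u : Fin n → k) : auxPhiF k n m V W V₀ W₀ hP hQ (glc k n m u)
    = auxC k n m V W V₀ W₀ hP u := by
  have h1 : glc k n m u = ∑ i, u i • gC k n m i := by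
    simp [glc, LinearMap.sum_apply, LinearMap.toSpanSingleton_apply]
  have h2 : u = ∑ i, u i • (Pi.single i 1 : Fin n → k) := by
    conv_lhs => rw [← Finset.univ_sum_single u]
    refine Finset.sum_congr rfl fun i _ => ?_
    rw [← Pi.single_smul, smul_eq_mul, mul_one]
  rw [h1, map_sum]
  conv_rhs => rw [h2, map_sum]
  refine Finset.sum_congr rfl fun i _ => ?_
  rw [map_smul, map_smul, auxPhiF_c]

lemma auxPhiF_rel {x y : FreeAlgebra k (QGen n m)} (h : relF k n m V W x y) :
    auxPhiF k n m V W V₀ W₀ hP hQ x = auxPhiF k n m V W V₀ W₀ hP hQ y := by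
  induction h with
  | idem1 => rw [map_mul, auxPhiF_e1, auxR11]
  | idem2 => rw [map_mul, auxPhiF_e2, auxR22]
  | orth12 => rw [map_mul, auxPhiF_e1, auxPhiF_e2, map_zero, auxR12]
  | orth21 => rw [map_mul, auxPhiF_e1, auxPhiF_e2, map_zero, auxR21]
  | unit => rw [map_add, auxPhiF_e1, auxPhiF_e2, map_one, auxRunit]
  | cLeft i => rw [map_mul, auxPhiF_e2, auxPhiF_c, auxR2C]
  | cRight i => rw [map_mul, auxPhiF_e1, auxPhiF_c, auxRC1]
  | bLeft j => rw [map_mul, auxPhiF_e1, auxPhiF_b, auxR1B]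
  | bRight j => rw [map_mul, auxPhiF_e2, auxPhiF_b, auxRB2]
  | bcb i j j' =>
      rw [map_mul, map_mul, auxPhiF_b, auxPhiF_c, auxPhiF_b, map_zero, auxRBCB]
  | wb j w hw =>
      rw [map_mul, auxPhiF_glc, auxPhiF_b, map_zero, auxRWB k n m V W V₀ W₀ hP hQ j w hw]
  | bv j v hv =>
      rw [map_mul, auxPhiF_glc, auxPhiF_b, map_zero, auxRBV k n m V W V₀ W₀ hP hQ j v hv]

/-- The representation of `R_F` on the model. -/
noncomputable def auxQphi : RF k n m V W →ₐ[k] Module.End k (auxM k n m V₀ W₀) :=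
  RingQuot.liftAlgHom k ⟨auxPhiF k n m V W V₀ W₀ hP hQ,
    fun _ _ h => auxPhiF_rel k n m V W V₀ W₀ hP hQ h⟩

lemma auxQphi_prF (x : FreeAlgebra k (QGen n m)) :
    auxQphi k n m V W V₀ W₀ hP hQ (prF k n m V W x) = auxPhiF k n m V W V₀ W₀ hP hQ x := by
  unfold prF auxQphi
  exact RingQuot.liftAlgHom_mkAlgHom_apply _ _ _ _

lemma auxQphi_e1 : auxQphi k n m V W V₀ W₀ hP hQ (qE1 k n m V W) = auxE1 k n m V W V₀ W₀ := by
  rw [qE1, auxQphi_prF, auxPhiF_e1]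

lemma auxQphi_e2 : auxQphi k n m V W V₀ W₀ hP hQ (qE2 k n m V W) = auxE2 k n m V W V₀ W₀ := by
  rw [qE2, auxQphi_prF, auxPhiF_e2]

lemma auxQphi_b (j : Fin m) :
    auxQphi k n m V W V₀ W₀ hP hQ (qB k n m V W j) = auxB k n m V W V₀ W₀ hQ j := by
  rw [qB, auxQphi_prF, auxPhiF_b]

lemma auxQphi_lc (u : Fin n → k) :
    auxQphi k n m V W V₀ W₀ hP hQ (qlc k n m V W u) = auxC k n m V W V₀ W₀ hP u := by
  have : qlc k n m V W u = prF k n m V W (glc k n m u) := rfl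
  rw [this, auxQphi_prF, auxPhiF_glc]

/-- The base point of the model. -/
noncomputable def auxm0 : auxM k n m V₀ W₀ := ((1, 0, 0), (0, 0, 1, 0))

/-- Evaluation of the representation at the base point. -/
noncomputable def auxPsi : RF k n m V W →ₗ[k] auxM k n m V₀ W₀ where
  toFun x := auxQphi k n m V W V₀ W₀ hP hQ x (auxm0 k n m V₀ W₀)
  map_add' x y := by simp [map_add]
  map_smul' c x := by simp [map_smul]

lemma auxPsi_mul (x y : RF k n m V W) :
    auxPsi k n m V W V₀ W₀ hP hQ (x * y)
      = auxQphi k n m V W V₀ W₀ hP hQ x (auxPsi k n m V W V₀ W₀ hP hQ y) := by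
  simp [auxPsi, map_mul, Module.End.mul_apply]

lemma auxPsi_e1 : auxPsi k n m V W V₀ W₀ hP hQ (qE1 k n m V W) = ((1, 0, 0), 0) := by
  simp [auxPsi, auxQphi_e1, auxE1_apply, auxm0]

lemma auxPsi_e2 : auxPsi k n m V W V₀ W₀ hP hQ (qE2 k n m V W) = (0, (0, 0, 1, 0)) := by
  simp [auxPsi, auxQphi_e2, auxE2_apply, auxm0]

lemma auxPsi_lc (u : Fin n → k) :
    auxPsi k n m V W V₀ W₀ hP hQ (qlc k n m V W u) = (0, (u, 0, 0, 0)) := by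
  simp only [auxPsi, LinearMap.coe_mk, AddHom.coe_mk, auxQphi_lc, auxC_apply, auxm0]
  refine Prod.ext rfl (Prod.ext (by simp) (Prod.ext (by funext j'; simp) (Prod.ext rfl
    (by funext j'; simp))))

lemma auxPsi_b (j : Fin m) :
    auxPsi k n m V W V₀ W₀ hP hQ (qB k n m V W j) = ((0, 0, Pi.single j 1), 0) := by
  simp only [auxPsi, LinearMap.coe_mk, AddHom.coe_mk, auxQphi_b, auxB_apply, auxm0]
  simp [Prod.ext_iff]

lemma auxPsi_b_lc (j : Fin m) (u : Fin n → k) :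
    auxPsi k n m V W V₀ W₀ hP hQ (qB k n m V W j * qlc k n m V W u)
      = ((0, Pi.single j (auxQ k n m V W V₀ W₀ hQ j u), 0), 0) := by
  rw [auxPsi_mul, auxPsi_lc, auxQphi_b, auxB_apply]
  simp [Prod.ext_iff]

lemma auxPsi_lc_b (j : Fin m) (u : Fin n → k) :
    auxPsi k n m V W V₀ W₀ hP hQ (qlc k n m V W u * qB k n m V W j)
      = (0, (0, 0, 0, Pi.single j (auxP k n m V W V₀ W₀ hP j u))) := by
  rw [auxPsi_mul, auxPsi_b, auxQphi_lc, auxC_apply]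
  refine Prod.ext rfl (Prod.ext (by simp) (Prod.ext (by funext j'; simp) (Prod.ext rfl ?_)))
  funext j'
  rcases eq_or_ne j' j with rfl | hne
  · simp
  · simp [Pi.single_eq_of_ne hne]

lemma auxPsi_lc_b_lc (j : Fin m) (u u' : Fin n → k) :
    auxPsi k n m V W V₀ W₀ hP hQ (qlc k n m V W u * qB k n m V W j * qlc k n m V W u')
      = (0, (0, Pi.single j ((auxP k n m V W V₀ W₀ hP j u) ⊗ₜ[k]
          (auxQ k n m V W V₀ W₀ hQ j u')), 0, 0)) := by
  rw [mul_assoc, auxPsi_mul, auxPsi_mul, auxPsi_lc, auxQphi_b, auxB_apply, auxQphi_lc,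
    auxC_apply]
  refine Prod.ext rfl (Prod.ext (by simp) (Prod.ext ?_ (Prod.ext rfl (by funext j'; simp))))
  funext j'
  rcases eq_or_ne j' j with rfl | hne
  · simp
  · simp [Pi.single_eq_of_ne hne]

end Aux4


section Aux5

variable (k : Type) [Field k] (n m : ℕ) (V W : Fin m → Submodule k (Fin n → k))
variable (V₀ W₀ : Submodule k (Fin n → k))

/-- The span of the normal-form monomials in `R_F`. -/
noncomputable def auxS : Submodule k (RF k n m V W) :=
  Submodule.span k {qE1 k n m V W} ⊔ Submodule.span k {qE2 k n m V W} ⊔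
  LinearMap.range (qlc k n m V W) ⊔ Submodule.span k (Set.range (qB k n m V W)) ⊔
  (⨆ j, bWsub k n m V W W₀ j) ⊔ (⨆ j, VbSub k n m V W V₀ j) ⊔
  (⨆ j, VbWsub k n m V W V₀ W₀ j)

lemma auxS_e1 : qE1 k n m V W ∈ auxS k n m V W V₀ W₀ :=
  Submodule.mem_sup_left <| Submodule.mem_sup_left <| Submodule.mem_sup_left <|
    Submodule.mem_sup_left <| Submodule.mem_sup_left <| Submodule.mem_sup_left <|
      Submodule.mem_span_singleton_self _

lemma auxS_e2 : qE2 k n m V W ∈ auxS k n m V W V₀ W₀ :=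
  Submodule.mem_sup_left <| Submodule.mem_sup_left <| Submodule.mem_sup_left <|
    Submodule.mem_sup_left <| Submodule.mem_sup_left <| Submodule.mem_sup_right <|
      Submodule.mem_span_singleton_self _

lemma auxS_lc (u : Fin n → k) : qlc k n m V W u ∈ auxS k n m V W V₀ W₀ :=
  Submodule.mem_sup_left <| Submodule.mem_sup_left <| Submodule.mem_sup_left <|
    Submodule.mem_sup_left <| Submodule.mem_sup_right <| LinearMap.mem_range_self _ u

lemma auxS_b (j : Fin m) : qB k n m V W j ∈ auxS k n m V W V₀ W₀ :=
  Submodule.mem_sup_left <| Submodule.mem_sup_left <| Submodule.mem_sup_left <|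
    Submodule.mem_sup_right <| Submodule.subset_span ⟨j, rfl⟩

lemma auxS_bW (j : Fin m) {w : Fin n → k} (hw : w ∈ W₀) :
    qB k n m V W j * qlc k n m V W w ∈ auxS k n m V W V₀ W₀ :=
  Submodule.mem_sup_left <| Submodule.mem_sup_left <| Submodule.mem_sup_right <|
    Submodule.mem_iSup_of_mem j (aux_mem_bW W₀ j hw)

lemma auxS_Vb (j : Fin m) {v : Fin n → k} (hv : v ∈ V₀) :
    qlc k n m V W v * qB k n m V W j ∈ auxS k n m V W V₀ W₀ :=
  Submodule.mem_sup_left <| Submodule.mem_sup_right <|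
    Submodule.mem_iSup_of_mem j (aux_mem_Vb V₀ j hv)

lemma auxS_VbW (j : Fin m) {v w : Fin n → k} (hv : v ∈ V₀) (hw : w ∈ W₀) :
    qlc k n m V W v * qB k n m V W j * qlc k n m V W w ∈ auxS k n m V W V₀ W₀ :=
  Submodule.mem_sup_right <| Submodule.mem_iSup_of_mem j (aux_mem_VbW V₀ W₀ j hv hw)

lemma auxS_mul_gen (g : RF k n m V W)
    (h1 : g * qE1 k n m V W ∈ auxS k n m V W V₀ W₀)
    (h2 : g * qE2 k n m V W ∈ auxS k n m V W V₀ W₀)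
    (h3 : ∀ u, g * qlc k n m V W u ∈ auxS k n m V W V₀ W₀)
    (h4 : ∀ j, g * qB k n m V W j ∈ auxS k n m V W V₀ W₀)
    (h5 : ∀ j w, w ∈ W₀ → g * (qB k n m V W j * qlc k n m V W w) ∈ auxS k n m V W V₀ W₀)
    (h6 : ∀ j v, v ∈ V₀ → g * (qlc k n m V W v * qB k n m V W j) ∈ auxS k n m V W V₀ W₀)
    (h7 : ∀ j v w, v ∈ V₀ → w ∈ W₀ →
      g * (qlc k n m V W v * qB k n m V W j * qlc k n m V W w) ∈ auxS k n m V W V₀ W₀) :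
    ∀ s ∈ auxS k n m V W V₀ W₀, g * s ∈ auxS k n m V W V₀ W₀ := by
  intro s hs
  have hle : auxS k n m V W V₀ W₀
      ≤ Submodule.comap (LinearMap.mulLeft k g) (auxS k n m V W V₀ W₀) := by
    refine sup_le (sup_le (sup_le (sup_le (sup_le (sup_le ?_ ?_) ?_) ?_) ?_) ?_) ?_
    · rw [Submodule.span_singleton_le_iff_mem]; exact h1
    · rw [Submodule.span_singleton_le_iff_mem]; exact h2
    · rintro _ ⟨u, rfl⟩; exact h3 u
    · rw [Submodule.span_le]; rintro _ ⟨j, rfl⟩; exact h4 j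
    · refine iSup_le fun j => ?_
      intro x hx
      obtain ⟨w, hw, rfl⟩ := aux_bW_elim hx
      exact h5 j w hw
    · refine iSup_le fun j => ?_
      intro x hx
      obtain ⟨v, hv, rfl⟩ := aux_Vb_elim hx
      exact h6 j v hv
    · refine iSup_le fun j => ?_
      rw [VbWsub, Submodule.span_le]
      rintro _ ⟨v, hv, w, hw, rfl⟩
      exact h7 j v w hv hw
  exact hle hs

lemma auxS_mulE1 : ∀ s ∈ auxS k n m V W V₀ W₀,
    qE1 k n m V W * s ∈ auxS k n m V W V₀ W₀ := by
  refine auxS_mul_gen k n m V W V₀ W₀ _ ?_ ?_ ?_ ?_ ?_ ?_ ?_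
  · rw [aux_e11]; exact auxS_e1 k n m V W V₀ W₀
  · rw [aux_e12]; exact zero_mem _
  · intro u; rw [aux_e1lc]; exact zero_mem _
  · intro j; rw [aux_e1b]; exact auxS_b k n m V W V₀ W₀ j
  · intro j w hw; rw [← mul_assoc, aux_e1b]; exact auxS_bW k n m V W V₀ W₀ j hw
  · intro j v hv; rw [← mul_assoc, aux_e1lc, zero_mul]; exact zero_mem _
  · intro j v w hv hw; rw [← mul_assoc, ← mul_assoc, aux_e1lc, zero_mul, zero_mul]
    exact zero_mem _

lemma auxS_mulE2 : ∀ s ∈ auxS k n m V W V₀ W₀,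
    qE2 k n m V W * s ∈ auxS k n m V W V₀ W₀ := by
  refine auxS_mul_gen k n m V W V₀ W₀ _ ?_ ?_ ?_ ?_ ?_ ?_ ?_
  · rw [aux_e21]; exact zero_mem _
  · rw [aux_e22]; exact auxS_e2 k n m V W V₀ W₀
  · intro u; rw [aux_e2lc]; exact auxS_lc k n m V W V₀ W₀ u
  · intro j; rw [aux_e2b]; exact zero_mem _
  · intro j w hw; rw [← mul_assoc, aux_e2b, zero_mul]; exact zero_mem _
  · intro j v hv; rw [← mul_assoc, aux_e2lc]; exact auxS_Vb k n m V W V₀ W₀ j hv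
  · intro j v w hv hw; rw [← mul_assoc, ← mul_assoc, aux_e2lc]
    exact auxS_VbW k n m V W V₀ W₀ j hv hw

lemma auxS_mulLC (hP : ∀ j, IsCompl V₀ (W j)) (u : Fin n → k) :
    ∀ s ∈ auxS k n m V W V₀ W₀, qlc k n m V W u * s ∈ auxS k n m V W V₀ W₀ := by
  refine auxS_mul_gen k n m V W V₀ W₀ _ ?_ ?_ ?_ ?_ ?_ ?_ ?_
  · rw [aux_lce1]; exact auxS_lc k n m V W V₀ W₀ u
  · rw [aux_lce2]; exact zero_mem _
  · intro u'; rw [aux_lclc]; exact zero_mem _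
  · intro j; rw [aux_c_red V₀ j (hP j)]
    exact auxS_Vb k n m V W V₀ W₀ j (Submodule.coe_mem _)
  · intro j w hw; rw [← mul_assoc, aux_c_red V₀ j (hP j)]
    exact auxS_VbW k n m V W V₀ W₀ j (Submodule.coe_mem _) hw
  · intro j v hv; rw [← mul_assoc, aux_lclc, zero_mul]; exact zero_mem _
  · intro j v w hv hw; rw [← mul_assoc, ← mul_assoc, aux_lclc, zero_mul, zero_mul]
    exact zero_mem _

lemma auxS_mulB (hQ : ∀ j, IsCompl W₀ (V j)) (j : Fin m) :
    ∀ s ∈ auxS k n m V W V₀ W₀, qB k n m V W j * s ∈ auxS k n m V W V₀ W₀ := by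
  refine auxS_mul_gen k n m V W V₀ W₀ _ ?_ ?_ ?_ ?_ ?_ ?_ ?_
  · rw [aux_be1]; exact zero_mem _
  · rw [aux_be2]; exact auxS_b k n m V W V₀ W₀ j
  · intro u; rw [aux_b_red W₀ j (hQ j)]
    exact auxS_bW k n m V W V₀ W₀ j (Submodule.coe_mem _)
  · intro j'; rw [aux_bb]; exact zero_mem _
  · intro j' w hw; rw [← mul_assoc, aux_bb, zero_mul]; exact zero_mem _
  · intro j' v hv; rw [aux_bcb]; exact zero_mem _
  · intro j' v w hv hw; rw [← mul_assoc, aux_bcb, zero_mul]; exact zero_mem _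

lemma auxS_one : (1 : RF k n m V W) ∈ auxS k n m V W V₀ W₀ := by
  rw [← aux_unit]
  exact add_mem (auxS_e1 k n m V W V₀ W₀) (auxS_e2 k n m V W V₀ W₀)

lemma auxS_top (hP : ∀ j, IsCompl V₀ (W j)) (hQ : ∀ j, IsCompl W₀ (V j)) :
    auxS k n m V W V₀ W₀ = ⊤ := by
  have hmul : ∀ y : FreeAlgebra k (QGen n m), ∀ s ∈ auxS k n m V W V₀ W₀,
      prF k n m V W y * s ∈ auxS k n m V W V₀ W₀ := by
    intro y
    have hy : y ∈ Algebra.adjoin k (Set.range (FreeAlgebra.ι k : QGen n m → _)) := by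
      rw [FreeAlgebra.adjoin_range_ι]; trivial
    induction hy using Algebra.adjoin_induction with
    | mem g hg =>
        obtain ⟨g, rfl⟩ := hg
        cases g with
        | e1 => exact auxS_mulE1 k n m V W V₀ W₀
        | e2 => exact auxS_mulE2 k n m V W V₀ W₀
        | c i =>
            intro s hs
            have h := auxS_mulLC k n m V W V₀ W₀ hP (Pi.single i 1) s hs
            rw [aux_qlc_single] at h
            exact h
        | b j => exact auxS_mulB k n m V W V₀ W₀ hQ j
    | algebraMap r =>
        intro s hs
        rw [AlgHom.commutes, ← Algebra.smul_def]
        exact Submodule.smul_mem _ r hs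
    | add a b ha hb iha ihb =>
        intro s hs
        rw [map_add, add_mul]
        exact add_mem (iha s hs) (ihb s hs)
    | mul a b ha hb iha ihb =>
        intro s hs
        rw [map_mul, mul_assoc]
        exact iha _ (ihb s hs)
  rw [eq_top_iff]
  intro x _
  obtain ⟨y, rfl⟩ := RingQuot.mkAlgHom_surjective k (relF k n m V W) x
  have h := hmul y 1 (auxS_one k n m V W V₀ W₀)
  rwa [mul_one] at h

lemma auxCornerLe (hP : ∀ j, IsCompl V₀ (W j)) (hQ : ∀ j, IsCompl W₀ (V j))
    (x y : RF k n m V W) (T : Submodule k (RF k n m V W))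
    (h1 : x * (qE1 k n m V W * y) ∈ T)
    (h2 : x * (qE2 k n m V W * y) ∈ T)
    (h3 : ∀ u, x * (qlc k n m V W u * y) ∈ T)
    (h4 : ∀ j, x * (qB k n m V W j * y) ∈ T)
    (h5 : ∀ j w, w ∈ W₀ → x * (qB k n m V W j * qlc k n m V W w * y) ∈ T)
    (h6 : ∀ j v, v ∈ V₀ → x * (qlc k n m V W v * qB k n m V W j * y) ∈ T)
    (h7 : ∀ j v w, v ∈ V₀ → w ∈ W₀ →
      x * (qlc k n m V W v * qB k n m V W j * qlc k n m V W w * y) ∈ T) :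
    cornerSub k n m V W x y ≤ T := by
  rintro _ ⟨z, rfl⟩
  have hz : z ∈ auxS k n m V W V₀ W₀ := by
    rw [auxS_top k n m V W V₀ W₀ hP hQ]; trivial
  have hle : auxS k n m V W V₀ W₀
      ≤ Submodule.comap ((LinearMap.mulLeft k x).comp (LinearMap.mulRight k y)) T := by
    refine sup_le (sup_le (sup_le (sup_le (sup_le (sup_le ?_ ?_) ?_) ?_) ?_) ?_) ?_
    · rw [Submodule.span_singleton_le_iff_mem]; exact h1
    · rw [Submodule.span_singleton_le_iff_mem]; exact h2
    · rintro _ ⟨u, rfl⟩; exact h3 u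
    · rw [Submodule.span_le]; rintro _ ⟨j, rfl⟩; exact h4 j
    · refine iSup_le fun j => ?_
      intro s hs
      obtain ⟨w, hw, rfl⟩ := aux_bW_elim hs
      exact h5 j w hw
    · refine iSup_le fun j => ?_
      intro s hs
      obtain ⟨v, hv, rfl⟩ := aux_Vb_elim hs
      exact h6 j v hv
    · refine iSup_le fun j => ?_
      rw [VbWsub, Submodule.span_le]
      rintro _ ⟨v, hv, w, hw, rfl⟩
      exact h7 j v w hv hw
  exact hle hz

end Aux5


section Aux6

variable (k : Type) [Field k] (n m : ℕ) (V W : Fin m → Submodule k (Fin n → k))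
variable (V₀ W₀ : Submodule k (Fin n → k))

lemma auxCorner11 (hP : ∀ j, IsCompl V₀ (W j)) (hQ : ∀ j, IsCompl W₀ (V j)) :
    (Submodule.span k {qE1 k n m V W} ⊔ ⨆ j, bWsub k n m V W W₀ j)
      = cornerSub k n m V W (qE1 k n m V W) (qE1 k n m V W) := by
  apply le_antisymm
  · refine sup_le ?_ (iSup_le fun j => ?_)
    · rw [Submodule.span_singleton_le_iff_mem]
      refine ⟨qE1 k n m V W, ?_⟩
      simp only [LinearMap.coe_comp, Function.comp_apply, LinearMap.mulRight_apply,
        LinearMap.mulLeft_apply]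
      rw [aux_e11, aux_e11]
    · intro s hs
      obtain ⟨w, hw, rfl⟩ := aux_bW_elim hs
      refine ⟨qB k n m V W j * qlc k n m V W w, ?_⟩
      simp only [LinearMap.coe_comp, Function.comp_apply, LinearMap.mulRight_apply,
        LinearMap.mulLeft_apply]
      rw [mul_assoc (qB k n m V W j), aux_lce1, ← mul_assoc, aux_e1b]
  · refine auxCornerLe k n m V W V₀ W₀ hP hQ _ _ _ ?_ ?_ ?_ ?_ ?_ ?_ ?_
    · rw [aux_e11, aux_e11]
      exact Submodule.mem_sup_left (Submodule.mem_span_singleton_self _)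
    · rw [aux_e21, mul_zero]; exact zero_mem _
    · intro u; rw [aux_lce1, aux_e1lc]; exact zero_mem _
    · intro j; rw [aux_be1, mul_zero]; exact zero_mem _
    · intro j w hw
      rw [mul_assoc (qB k n m V W j), aux_lce1, ← mul_assoc, aux_e1b]
      exact Submodule.mem_sup_right (Submodule.mem_iSup_of_mem j (aux_mem_bW W₀ j hw))
    · intro j v hv
      rw [mul_assoc (qlc k n m V W v), aux_be1, mul_zero, mul_zero]; exact zero_mem _
    · intro j v w hv hw
      rw [← mul_assoc, ← mul_assoc, ← mul_assoc, aux_e1lc, zero_mul, zero_mul, zero_mul]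
      exact zero_mem _

lemma auxCorner12 (hP : ∀ j, IsCompl V₀ (W j)) (hQ : ∀ j, IsCompl W₀ (V j)) :
    cornerSub k n m V W (qE1 k n m V W) (qE2 k n m V W)
      = Submodule.span k (Set.range (qB k n m V W)) := by
  apply le_antisymm
  · refine auxCornerLe k n m V W V₀ W₀ hP hQ _ _ _ ?_ ?_ ?_ ?_ ?_ ?_ ?_
    · rw [aux_e12, mul_zero]; exact zero_mem _
    · rw [aux_e22, aux_e12]; exact zero_mem _
    · intro u; rw [aux_lce2, mul_zero]; exact zero_mem _
    · intro j; rw [aux_be2, aux_e1b]; exact Submodule.subset_span ⟨j, rfl⟩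
    · intro j w hw
      rw [mul_assoc (qB k n m V W j), aux_lce2, mul_zero, mul_zero]; exact zero_mem _
    · intro j v hv
      rw [mul_assoc (qlc k n m V W v), aux_be2, ← mul_assoc, aux_e1lc, zero_mul]
      exact zero_mem _
    · intro j v w hv hw
      rw [mul_assoc (qlc k n m V W v * qB k n m V W j) (qlc k n m V W w) (qE2 k n m V W),
        aux_lce2, mul_zero, mul_zero]
      exact zero_mem _
  · rw [Submodule.span_le]
    rintro _ ⟨j, rfl⟩
    refine ⟨qB k n m V W j, ?_⟩
    simp only [LinearMap.coe_comp, Function.comp_apply, LinearMap.mulRight_apply,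
      LinearMap.mulLeft_apply]
    rw [aux_be2, aux_e1b]

lemma auxCorner21 (hP : ∀ j, IsCompl V₀ (W j)) (hQ : ∀ j, IsCompl W₀ (V j)) :
    (LinearMap.range (qlc k n m V W) ⊔ ⨆ j, VbWsub k n m V W V₀ W₀ j)
      = cornerSub k n m V W (qE2 k n m V W) (qE1 k n m V W) := by
  apply le_antisymm
  · refine sup_le ?_ (iSup_le fun j => ?_)
    · rintro _ ⟨u, rfl⟩
      refine ⟨qlc k n m V W u, ?_⟩
      simp only [LinearMap.coe_comp, Function.comp_apply, LinearMap.mulRight_apply,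
        LinearMap.mulLeft_apply]
      rw [aux_lce1, aux_e2lc]
    · rw [VbWsub, Submodule.span_le]
      rintro _ ⟨v, hv, w, hw, rfl⟩
      refine ⟨qlc k n m V W v * qB k n m V W j * qlc k n m V W w, ?_⟩
      simp only [LinearMap.coe_comp, Function.comp_apply, LinearMap.mulRight_apply,
        LinearMap.mulLeft_apply]
      rw [mul_assoc (qlc k n m V W v * qB k n m V W j) (qlc k n m V W w) (qE1 k n m V W),
        aux_lce1, ← mul_assoc, ← mul_assoc, aux_e2lc]
  · refine auxCornerLe k n m V W V₀ W₀ hP hQ _ _ _ ?_ ?_ ?_ ?_ ?_ ?_ ?_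
    · rw [aux_e11, aux_e21]; exact zero_mem _
    · rw [aux_e21, mul_zero]; exact zero_mem _
    · intro u; rw [aux_lce1, aux_e2lc]
      exact Submodule.mem_sup_left (LinearMap.mem_range_self _ u)
    · intro j; rw [aux_be1, mul_zero]; exact zero_mem _
    · intro j w hw
      rw [mul_assoc (qB k n m V W j), aux_lce1, ← mul_assoc, aux_e2b, zero_mul]
      exact zero_mem _
    · intro j v hv
      rw [mul_assoc (qlc k n m V W v), aux_be1, mul_zero, mul_zero]; exact zero_mem _
    · intro j v w hv hw
      rw [mul_assoc (qlc k n m V W v * qB k n m V W j) (qlc k n m V W w) (qE1 k n m V W),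
        aux_lce1, ← mul_assoc, ← mul_assoc, aux_e2lc]
      exact Submodule.mem_sup_right
        (Submodule.mem_iSup_of_mem j (aux_mem_VbW V₀ W₀ j hv hw))

lemma auxCorner22 (hP : ∀ j, IsCompl V₀ (W j)) (hQ : ∀ j, IsCompl W₀ (V j)) :
    (Submodule.span k {qE2 k n m V W} ⊔ ⨆ j, VbSub k n m V W V₀ j)
      = cornerSub k n m V W (qE2 k n m V W) (qE2 k n m V W) := by
  apply le_antisymm
  · refine sup_le ?_ (iSup_le fun j => ?_)
    · rw [Submodule.span_singleton_le_iff_mem]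
      refine ⟨qE2 k n m V W, ?_⟩
      simp only [LinearMap.coe_comp, Function.comp_apply, LinearMap.mulRight_apply,
        LinearMap.mulLeft_apply]
      rw [aux_e22, aux_e22]
    · intro s hs
      obtain ⟨v, hv, rfl⟩ := aux_Vb_elim hs
      refine ⟨qlc k n m V W v * qB k n m V W j, ?_⟩
      simp only [LinearMap.coe_comp, Function.comp_apply, LinearMap.mulRight_apply,
        LinearMap.mulLeft_apply]
      rw [mul_assoc (qlc k n m V W v), aux_be2, ← mul_assoc, aux_e2lc]
  · refine auxCornerLe k n m V W V₀ W₀ hP hQ _ _ _ ?_ ?_ ?_ ?_ ?_ ?_ ?_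
    · rw [aux_e12, mul_zero]; exact zero_mem _
    · rw [aux_e22, aux_e22]
      exact Submodule.mem_sup_left (Submodule.mem_span_singleton_self _)
    · intro u; rw [aux_lce2, mul_zero]; exact zero_mem _
    · intro j; rw [aux_be2, aux_e2b]; exact zero_mem _
    · intro j w hw
      rw [mul_assoc (qB k n m V W j), aux_lce2, mul_zero, mul_zero]; exact zero_mem _
    · intro j v hv
      rw [mul_assoc (qlc k n m V W v), aux_be2, ← mul_assoc, aux_e2lc]
      exact Submodule.mem_sup_right (Submodule.mem_iSup_of_mem j (aux_mem_Vb V₀ j hv))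
    · intro j v w hv hw
      rw [mul_assoc (qlc k n m V W v * qB k n m V W j) (qlc k n m V W w) (qE2 k n m V W),
        aux_lce2, mul_zero, mul_zero]
      exact zero_mem _

end Aux6


section Aux7

variable (k : Type) [Field k] (n m : ℕ) (V W : Fin m → Submodule k (Fin n → k))
variable (V₀ W₀ : Submodule k (Fin n → k))

lemma auxPsi_Phi (hP : ∀ j, IsCompl V₀ (W j)) (hQ : ∀ j, IsCompl W₀ (V j))
    (j : Fin m) (t : ↥V₀ ⊗[k] ↥W₀) :
    auxPsi k n m V W V₀ W₀ hP hQ (auxPhi (V := V) (W := W) V₀ W₀ j t)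
      = (0, (0, Pi.single j t, 0, 0)) := by
  induction t using TensorProduct.induction_on with
  | zero => simp [Prod.ext_iff]
  | tmul v w =>
      rw [auxPhi_tmul, auxPsi_lc_b_lc]
      have hv : auxP k n m V W V₀ W₀ hP j ↑v = v :=
        Submodule.linearProjOfIsCompl_apply_left (hP j) v
      have hw : auxQ k n m V W V₀ W₀ hQ j ↑w = w :=
        Submodule.linearProjOfIsCompl_apply_left (hQ j) w
      rw [hv, hw]
  | add a b ha hb => rw [map_add, map_add, ha, hb]; simp [Prod.ext_iff, Pi.single_add]

/-- Projections for the decomposition of `e₁ R_F e₁`. -/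
noncomputable def auxProj1 (hP : ∀ j, IsCompl V₀ (W j)) (hQ : ∀ j, IsCompl W₀ (V j))
    (o : Option (Fin m)) : RF k n m V W →ₗ[k] RF k n m V W :=
  o.elim
    { toFun := fun x => (auxPsi k n m V W V₀ W₀ hP hQ x).1.1 • qE1 k n m V W
      map_add' := fun x y => by simp [map_add, add_smul]
      map_smul' := fun c x => by simp [map_smul, smul_smul] }
    (fun j =>
    { toFun := fun x =>
        qB k n m V W j * qlc k n m V W ↑((auxPsi k n m V W V₀ W₀ hP hQ x).1.2.1 j)
      map_add' := fun x y => by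
        simp [map_add, Submodule.coe_add, mul_add]
      map_smul' := fun c x => by
        simp [map_smul, Submodule.coe_smul, mul_smul_comm] })

/-- Projections for the decomposition of `e₂ R_F e₁`. -/
noncomputable def auxProj3 (hP : ∀ j, IsCompl V₀ (W j)) (hQ : ∀ j, IsCompl W₀ (V j))
    (o : Option (Fin m)) : RF k n m V W →ₗ[k] RF k n m V W :=
  o.elim
    ((qlc k n m V W).comp
      ({ toFun := fun x => (auxPsi k n m V W V₀ W₀ hP hQ x).2.1
         map_add' := fun x y => by simp [map_add]
         map_smul' := fun c x => by simp [map_smul] } :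
        RF k n m V W →ₗ[k] (Fin n → k)))
    (fun j => (auxPhi (V := V) (W := W) V₀ W₀ j).comp
      ({ toFun := fun x => (auxPsi k n m V W V₀ W₀ hP hQ x).2.2.1 j
         map_add' := fun x y => by simp [map_add]
         map_smul' := fun c x => by simp [map_smul] } :
        RF k n m V W →ₗ[k] (↥V₀ ⊗[k] ↥W₀)))

/-- Projections for the decomposition of `e₂ R_F e₂`. -/
noncomputable def auxProj4 (hP : ∀ j, IsCompl V₀ (W j)) (hQ : ∀ j, IsCompl W₀ (V j))
    (o : Option (Fin m)) : RF k n m V W →ₗ[k] RF k n m V W :=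
  o.elim
    { toFun := fun x => (auxPsi k n m V W V₀ W₀ hP hQ x).2.2.2.1 • qE2 k n m V W
      map_add' := fun x y => by simp [map_add, add_smul]
      map_smul' := fun c x => by simp [map_smul, smul_smul] }
    (fun j =>
    { toFun := fun x =>
        qlc k n m V W ↑((auxPsi k n m V W V₀ W₀ hP hQ x).2.2.2.2 j) * qB k n m V W j
      map_add' := fun x y => by
        simp [map_add, Submodule.coe_add, add_mul]
      map_smul' := fun c x => by
        simp [map_smul, Submodule.coe_smul, smul_mul_assoc] })

lemma auxIndep1 (hP : ∀ j, IsCompl V₀ (W j)) (hQ : ∀ j, IsCompl W₀ (V j)) :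
    iSupIndep (fun o : Option (Fin m) =>
      o.elim (Submodule.span k {qE1 k n m V W}) (bWsub k n m V W W₀)) := by
  refine auxIndepOfProj _ (auxProj1 k n m V W V₀ W₀ hP hQ) ?_ ?_
  · rintro (_ | j) x hx
    · obtain ⟨a, rfl⟩ := Submodule.mem_span_singleton.1 hx
      simp [auxProj1, map_smul, auxPsi_e1, mul_smul]
    · obtain ⟨w, hw, rfl⟩ := aux_bW_elim hx
      have hQw : auxQ k n m V W V₀ W₀ hQ j w = ⟨w, hw⟩ :=
        Submodule.linearProjOfIsCompl_apply_left (hQ j) ⟨w, hw⟩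
      simp [auxProj1, auxPsi_b_lc, hQw]
  · rintro (_ | j) (_ | j') hne x hx
    · exact absurd rfl hne
    · obtain ⟨w, hw, rfl⟩ := aux_bW_elim hx
      simp [auxProj1, auxPsi_b_lc]
    · obtain ⟨a, rfl⟩ := Submodule.mem_span_singleton.1 hx
      simp [auxProj1, map_smul, auxPsi_e1]
    · have hjj : j' ≠ j := by simpa using hne
      obtain ⟨w, hw, rfl⟩ := aux_bW_elim hx
      simp [auxProj1, auxPsi_b_lc, Pi.single_apply, hjj, hjj.symm]

lemma auxIndep3 (hP : ∀ j, IsCompl V₀ (W j)) (hQ : ∀ j, IsCompl W₀ (V j)) :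
    iSupIndep (fun o : Option (Fin m) =>
      o.elim (LinearMap.range (qlc k n m V W)) (VbWsub k n m V W V₀ W₀)) := by
  refine auxIndepOfProj _ (auxProj3 k n m V W V₀ W₀ hP hQ) ?_ ?_
  · rintro (_ | j) x hx
    · obtain ⟨u, rfl⟩ := hx
      simp [auxProj3, auxPsi_lc]
    · replace hx : x ∈ VbWsub k n m V W V₀ W₀ j := hx
      rw [aux_VbW_eq] at hx
      obtain ⟨t, rfl⟩ := hx
      simp [auxProj3, auxPsi_Phi k n m V W V₀ W₀ hP hQ]
  · rintro (_ | j) (_ | j') hne x hx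
    · exact absurd rfl hne
    · replace hx : x ∈ VbWsub k n m V W V₀ W₀ j' := hx
      rw [aux_VbW_eq] at hx
      obtain ⟨t, rfl⟩ := hx
      simp [auxProj3, auxPsi_Phi k n m V W V₀ W₀ hP hQ]
    · obtain ⟨u, rfl⟩ := hx
      simp [auxProj3, auxPsi_lc]
    · have hjj : j' ≠ j := by simpa using hne
      replace hx : x ∈ VbWsub k n m V W V₀ W₀ j' := hx
      rw [aux_VbW_eq] at hx
      obtain ⟨t, rfl⟩ := hx
      simp [auxProj3, auxPsi_Phi k n m V W V₀ W₀ hP hQ, Pi.single_apply, hjj, hjj.symm]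

lemma auxIndep4 (hP : ∀ j, IsCompl V₀ (W j)) (hQ : ∀ j, IsCompl W₀ (V j)) :
    iSupIndep (fun o : Option (Fin m) =>
      o.elim (Submodule.span k {qE2 k n m V W}) (VbSub k n m V W V₀)) := by
  refine auxIndepOfProj _ (auxProj4 k n m V W V₀ W₀ hP hQ) ?_ ?_
  · rintro (_ | j) x hx
    · obtain ⟨a, rfl⟩ := Submodule.mem_span_singleton.1 hx
      simp [auxProj4, map_smul, auxPsi_e2, mul_smul]
    · obtain ⟨v, hv, rfl⟩ := aux_Vb_elim hx
      have hPv : auxP k n m V W V₀ W₀ hP j v = ⟨v, hv⟩ :=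
        Submodule.linearProjOfIsCompl_apply_left (hP j) ⟨v, hv⟩
      simp [auxProj4, auxPsi_lc_b, hPv]
  · rintro (_ | j) (_ | j') hne x hx
    · exact absurd rfl hne
    · obtain ⟨v, hv, rfl⟩ := aux_Vb_elim hx
      simp [auxProj4, auxPsi_lc_b]
    · obtain ⟨a, rfl⟩ := Submodule.mem_span_singleton.1 hx
      simp [auxProj4, map_smul, auxPsi_e2]
    · have hjj : j' ≠ j := by simpa using hne
      obtain ⟨v, hv, rfl⟩ := aux_Vb_elim hx
      simp [auxProj4, auxPsi_lc_b, Pi.single_apply, hjj, hjj.symm]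

end Aux7

/-- Lemma `decompR`: for `R_F = kQ_{n,m}/I_F` attached to a family of subspaces
`V i` of dimension `t` and `W i` of codimension `t` of `C = k^n`, and any choice of
subspaces `V₀, W₀ ⊆ C` with `dim V₀ = t`, `dim W₀ = n − t`, `V₀ ∩ W i = 0`,
`W₀ ∩ V i = 0` and `V₀ ⊕ W₀ = C`, there are direct sum decompositions of vector spaces
`e₁R_Fe₁ = ⟨e₁⟩ ⊕ ⊕_j b_j W₀`, `e₁R_Fe₂ = B`, `e₂R_Fe₁ = C ⊕ ⊕_j V₀ b_j W₀` and
`e₂R_Fe₂ = ⟨e₂⟩ ⊕ ⊕_j V₀ b_j`. -/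
theorem stmt_9 (t : ℕ) (ht0 : 0 < t) (htn : t < n)
    (hVd : ∀ i, Module.finrank k (V i) = t)
    (hWd : ∀ i, Module.finrank k (W i) = n - t)
    (V₀ W₀ : Submodule k (Fin n → k))
    (hV₀d : Module.finrank k V₀ = t) (hW₀d : Module.finrank k W₀ = n - t)
    (hV₀W : ∀ i, V₀ ⊓ W i = ⊥) (hW₀V : ∀ i, W₀ ⊓ V i = ⊥)
    (hdisj : V₀ ⊓ W₀ = ⊥) (hcompl : V₀ ⊔ W₀ = ⊤) :
    -- e₁ R_F e₁ = ⟨e₁⟩ ⊕ ⊕_j b_j W₀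
    ((Submodule.span k {qE1 k n m V W} ⊔ ⨆ j, bWsub k n m V W W₀ j)
        = cornerSub k n m V W (qE1 k n m V W) (qE1 k n m V W) ∧
      iSupIndep (fun o : Option (Fin m) =>
        o.elim (Submodule.span k {qE1 k n m V W}) (bWsub k n m V W W₀))) ∧
    -- e₁ R_F e₂ = B
    (cornerSub k n m V W (qE1 k n m V W) (qE2 k n m V W)
        = Submodule.span k (Set.range (qB k n m V W))) ∧
    -- e₂ R_F e₁ = C ⊕ ⊕_j V₀ b_j W₀
    ((LinearMap.range (qlc k n m V W) ⊔ ⨆ j, VbWsub k n m V W V₀ W₀ j)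
        = cornerSub k n m V W (qE2 k n m V W) (qE1 k n m V W) ∧
      iSupIndep (fun o : Option (Fin m) =>
        o.elim (LinearMap.range (qlc k n m V W)) (VbWsub k n m V W V₀ W₀))) ∧
    -- e₂ R_F e₂ = ⟨e₂⟩ ⊕ ⊕_j V₀ b_j
    ((Submodule.span k {qE2 k n m V W} ⊔ ⨆ j, VbSub k n m V W V₀ j)
        = cornerSub k n m V W (qE2 k n m V W) (qE2 k n m V W) ∧
      iSupIndep (fun o : Option (Fin m) =>
        o.elim (Submodule.span k {qE2 k n m V W}) (VbSub k n m V W V₀))) := by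
  have ht : t ≤ n := htn.le
  have hP : ∀ j, IsCompl V₀ (W j) := by
    intro j
    refine ⟨disjoint_iff.2 (hV₀W j), codisjoint_iff.2 ?_⟩
    apply Submodule.eq_top_of_finrank_eq
    have h := Submodule.finrank_sup_add_finrank_inf_eq V₀ (W j)
    rw [hV₀W j] at h
    simp only [finrank_bot, add_zero] at h
    rw [h, hV₀d, hWd j, Module.finrank_pi, Fintype.card_fin]
    omega
  have hQ : ∀ j, IsCompl W₀ (V j) := by
    intro j
    refine ⟨disjoint_iff.2 (hW₀V j), codisjoint_iff.2 ?_⟩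
    apply Submodule.eq_top_of_finrank_eq
    have h := Submodule.finrank_sup_add_finrank_inf_eq W₀ (V j)
    rw [hW₀V j] at h
    simp only [finrank_bot, add_zero] at h
    rw [h, hW₀d, hVd j, Module.finrank_pi, Fintype.card_fin]
    omega
  exact ⟨⟨auxCorner11 k n m V W V₀ W₀ hP hQ, auxIndep1 k n m V W V₀ W₀ hP hQ⟩,
    auxCorner12 k n m V W V₀ W₀ hP hQ,
    ⟨auxCorner21 k n m V W V₀ W₀ hP hQ, auxIndep3 k n m V W V₀ W₀ hP hQ⟩,
    ⟨auxCorner22 k n m V W V₀ W₀ hP hQ, auxIndep4 k n m V W V₀ W₀ hP hQ⟩⟩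

end
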